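/- (Gauss summation theorem) For complex numbers a, b, c with Re(c - a - b) > 0 and c not a nonpositive integer, the series ∑_{k=0}^{∞} (a)_k (b)_k / ((c)_k · k!) converges and equals Γ(c)Γ(c-a-b) / (Γ(c-a)Γ(c-b)). -/

import Mathlib

open Complex Finset

open Filter Topology

/-- Pochhammer symbol `(x)_k = x (x+1) ⋯ (x+k-1)`. -/
noncomputable def poch (x : ℂ) (k : ℕ) : ℂ := ∏ i ∈ Finset.range k, (x + i)

/-- Beta function `B(x,y) = Γ(x) Γ(y) / Γ(x+y)`. -/
noncomputable def cBeta (x y : ℂ) : ℂ :=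
  Complex.Gamma x * Complex.Gamma y / Complex.Gamma (x + y)

noncomputable def T (a b c : ℂ) (k : ℕ) : ℂ :=
  poch a k * poch b k / (poch c k * (Nat.factorial k : ℂ))

lemma poch_zero (x : ℂ) : poch x 0 = 1 := by simp [poch]

lemma poch_succ (x : ℂ) (k : ℕ) : poch x (k + 1) = poch x k * (x + k) := by
  simp [poch, Finset.prod_range_succ]

lemma poch_succ' (x : ℂ) (k : ℕ) : poch x (k + 1) = x * poch (x + 1) k := by
  rw [poch, Finset.prod_range_succ', poch]
  simp only [Nat.cast_zero, add_zero, Nat.cast_add, Nat.cast_one]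
  rw [mul_comm]
  congr 1
  exact Finset.prod_congr rfl fun i _ => by ring

lemma poch_ne_zero {x : ℂ} (hx : ∀ k : ℕ, x ≠ -k) (k : ℕ) : poch x k ≠ 0 := by
  apply Finset.prod_ne_zero_iff.2
  intro i _
  intro hcon
  exact hx i (by linear_combination hcon)

lemma poch_one (k : ℕ) : poch 1 k = (Nat.factorial k : ℂ) := by
  induction k with
  | zero => simp [poch_zero]
  | succ n ih => rw [poch_succ, ih]; push_cast [Nat.factorial_succ]; ring

lemma GammaSeq_eq (s : ℂ) (n : ℕ) : Complex.GammaSeq s n = (n:ℂ) ^ s * (Nat.factorial n : ℂ) / poch s (n+1) := rfl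

set_option maxHeartbeats 1000000 in
lemma step (a b c' : ℂ) (hc' : ∀ k : ℕ, c' ≠ -k) (k : ℕ) :
    c' * (c' - a - b) * T a b c' k - (c' - a) * (c' - b) * T a b (c' + 1) k
      = (k:ℂ) * (c' + k) * T a b (c' + 1) k
        - ((k:ℂ) + 1) * (c' + 1 + k) * T a b (c' + 1) (k + 1) := by
  have hc0 : c' ≠ 0 := by simpa using hc' 0
  have hck : c' + k ≠ 0 := by
    intro hcon; exact hc' k (by linear_combination hcon)
  have hck1 : c' + 1 + k ≠ 0 := by
    intro hcon; exact hc' (k+1) (by push_cast; linear_combination hcon)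
  have hp : poch c' k ≠ 0 := poch_ne_zero hc' k
  have hfac : (Nat.factorial k : ℂ) ≠ 0 := by exact_mod_cast (Nat.factorial_pos k).ne'
  have hk1 : ((k:ℂ) + 1) ≠ 0 := by
    have : ((k+1:ℕ):ℂ) ≠ 0 := Nat.cast_ne_zero.2 k.succ_ne_zero
    push_cast at this; exact this
  have key : c' * poch (c' + 1) k = poch c' k * (c' + k) := by
    rw [← poch_succ', poch_succ]
  have hQ : poch (c' + 1) k ≠ 0 := by
    intro h
    rw [h, mul_zero] at key
    exact mul_ne_zero hp hck key.symm
  have hp2 : poch c' k = c' * poch (c' + 1) k / (c' + k) := by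
    field_simp; linear_combination -key
  simp only [T, poch_succ, hp2, Nat.factorial_succ, Nat.cast_mul, Nat.cast_add, Nat.cast_one]
  field_simp
  ring

lemma tendsto_const_div_nat (z : ℂ) : Tendsto (fun n : ℕ => z / n) atTop (𝓝 0) := by
  rw [tendsto_zero_iff_norm_tendsto_zero]
  have : (fun n : ℕ => ‖z / (n:ℂ)‖) = fun n : ℕ => ‖z‖ / n := by
    funext n; rw [norm_div]; norm_num
  rw [this]
  exact tendsto_const_div_atTop_nhds_zero_nat ‖z‖

lemma tendsto_cpow_neg {z : ℂ} (hz : z.re < 0) :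
    Tendsto (fun n : ℕ => (n:ℂ) ^ z) atTop (𝓝 0) := by
  rw [tendsto_zero_iff_norm_tendsto_zero]
  have hev : ∀ᶠ n : ℕ in atTop, (n:ℝ) ^ z.re = ‖(n:ℂ) ^ z‖ := by
    filter_upwards [eventually_ge_atTop 1] with n hn
    have hn' : (0:ℝ) < n := by exact_mod_cast hn
    rw [show ((n:ℕ):ℂ) = (((n:ℕ):ℝ):ℂ) by push_cast; ring,
      Complex.norm_cpow_eq_rpow_re_of_pos hn']
  refine Tendsto.congr' hev ?_
  have := (tendsto_rpow_neg_atTop (y := -z.re) (by linarith)).comp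
    (tendsto_natCast_atTop_atTop (R := ℝ))
  simpa [Function.comp_def] using this

lemma cpow_nat_ne_zero {n : ℕ} (hn : 1 ≤ n) (w : ℂ) : (n:ℂ) ^ w ≠ 0 := by
  intro h
  rcases (Complex.cpow_eq_zero_iff _ _).1 h with ⟨h1, -⟩
  exact (Nat.cast_ne_zero.2 (by omega) : (n:ℂ) ≠ 0) h1

lemma GammaSeq_ne_zero {x : ℂ} (hx : ∀ k : ℕ, x ≠ -k) {n : ℕ} (hn : 1 ≤ n) :
    Complex.GammaSeq x n ≠ 0 := by
  rw [GammaSeq_eq]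
  have hfac : (Nat.factorial n : ℂ) ≠ 0 := by exact_mod_cast (Nat.factorial_pos n).ne'
  exact div_ne_zero (mul_ne_zero (cpow_nat_ne_zero hn x) hfac) (poch_ne_zero hx (n+1))

lemma poch_formula (x : ℂ) (hx : ∀ k : ℕ, x ≠ -k) {n : ℕ} (hn : 1 ≤ n) :
    poch x n = (n:ℂ) ^ x * (Nat.factorial n : ℂ) / (Complex.GammaSeq x n * (x + n)) := by
  have hxn : x + n ≠ 0 := fun hcon => hx n (by linear_combination hcon)
  have hfac : (Nat.factorial n : ℂ) ≠ 0 := by exact_mod_cast (Nat.factorial_pos n).ne'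
  rw [eq_div_iff (mul_ne_zero (GammaSeq_ne_zero hx hn) hxn), GammaSeq_eq, poch_succ]
  field_simp [poch_ne_zero hx n]

lemma tendsto_shift_ratio (p q r s : ℂ) (hp : ∀ k : ℕ, p ≠ -k) (hq : ∀ k : ℕ, q ≠ -k) :
    Tendsto (fun n : ℕ => (r + n) * (s + n) / ((p + n) * (q + n))) atTop (𝓝 1) := by
  have hmain : Tendsto (fun n : ℕ => (r/n + 1) * (s/n + 1) / ((p/n + 1) * (q/n + 1)))
      atTop (𝓝 1) := by
    have l : ∀ z : ℂ, Tendsto (fun n : ℕ => z / n + 1) atTop (𝓝 1) := by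
      intro z
      have := (tendsto_const_div_nat z).add (tendsto_const_nhds (x := (1:ℂ)))
      simpa using this
    have := ((l r).mul (l s)).div ((l p).mul (l q)) (by norm_num)
    simpa [Pi.div_def] using this
  refine Tendsto.congr' ?_ hmain
  filter_upwards [eventually_ge_atTop 1] with n hn
  have hn0 : (n:ℂ) ≠ 0 := Nat.cast_ne_zero.2 (by omega)
  have hpn : p + n ≠ 0 := fun hcon => hp n (by linear_combination hcon)
  have hqn : q + n ≠ 0 := fun hcon => hq n (by linear_combination hcon)
  field_simp

lemma GammaSeq_mul (x : ℂ) {n : ℕ} (hx : ∀ k : ℕ, x ≠ -k) :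
    Complex.GammaSeq x n * (poch x n * (x + n)) = (n:ℂ) ^ x * (Nat.factorial n : ℂ) := by
  rw [GammaSeq_eq, ← poch_succ, div_mul_cancel₀ _ (poch_ne_zero hx (n+1))]

lemma ratio_tendsto (p q r s : ℂ) (hp : ∀ k : ℕ, p ≠ -k) (hq : ∀ k : ℕ, q ≠ -k)
    (hr : ∀ k : ℕ, r ≠ -k) (hs : ∀ k : ℕ, s ≠ -k) :
    Tendsto (fun n : ℕ => (n:ℂ) ^ (r + s - p - q) *
        (poch p n * poch q n / (poch r n * poch s n))) atTop
      (𝓝 (Complex.Gamma r * Complex.Gamma s / (Complex.Gamma p * Complex.Gamma q))) := by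
  have hmain : Tendsto (fun n : ℕ => ((r + n) * (s + n) / ((p + n) * (q + n))) *
      ((Complex.GammaSeq r n * Complex.GammaSeq s n) /
        (Complex.GammaSeq p n * Complex.GammaSeq q n))) atTop
      (𝓝 (Complex.Gamma r * Complex.Gamma s / (Complex.Gamma p * Complex.Gamma q))) := by
    have h2 : Tendsto (fun n : ℕ => (Complex.GammaSeq r n * Complex.GammaSeq s n) /
        (Complex.GammaSeq p n * Complex.GammaSeq q n)) atTop
        (𝓝 (Complex.Gamma r * Complex.Gamma s / (Complex.Gamma p * Complex.Gamma q))) :=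
      ((Complex.GammaSeq_tendsto_Gamma r).mul (Complex.GammaSeq_tendsto_Gamma s)).div
        ((Complex.GammaSeq_tendsto_Gamma p).mul (Complex.GammaSeq_tendsto_Gamma q))
        (mul_ne_zero (Complex.Gamma_ne_zero hp) (Complex.Gamma_ne_zero hq))
    have := (tendsto_shift_ratio p q r s hp hq).mul h2
    simpa using this
  refine Tendsto.congr' ?_ hmain
  filter_upwards [eventually_ge_atTop 1] with n hn
  have hn0 : (n:ℂ) ≠ 0 := Nat.cast_ne_zero.2 (by omega)
  have hfac : (Nat.factorial n : ℂ) ≠ 0 := by exact_mod_cast (Nat.factorial_pos n).ne'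
  have hpn : p + n ≠ 0 := fun hcon => hp n (by linear_combination hcon)
  have hqn : q + n ≠ 0 := fun hcon => hq n (by linear_combination hcon)
  have hrn : r + n ≠ 0 := fun hcon => hr n (by linear_combination hcon)
  have hsn : s + n ≠ 0 := fun hcon => hs n (by linear_combination hcon)
  have hGp := GammaSeq_ne_zero hp hn
  have hGq := GammaSeq_ne_zero hq hn
  have hGr := GammaSeq_ne_zero hr hn
  have hGs := GammaSeq_ne_zero hs hn
  have hcp := cpow_nat_ne_zero hn p
  have hcq := cpow_nat_ne_zero hn q
  have hcr := cpow_nat_ne_zero hn r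
  have hcs := cpow_nat_ne_zero hn s
  have hpow : (n:ℂ) ^ (r + s - p - q) * ((n:ℂ)^p * (n:ℂ)^q) = (n:ℂ)^r * (n:ℂ)^s := by
    rw [← Complex.cpow_add _ _ hn0, ← Complex.cpow_add _ _ hn0,
      show r + s - p - q + (p + q) = r + s by ring, Complex.cpow_add _ _ hn0]
  have hPr := poch_ne_zero hr n
  have hPs := poch_ne_zero hs n
  rw [eq_comm, mul_div_assoc' ((n:ℂ) ^ (r + s - p - q)), div_mul_div_comm,
    div_eq_div_iff (mul_ne_zero hPr hPs)
      (mul_ne_zero (mul_ne_zero hpn hqn) (mul_ne_zero hGp hGq))]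
  calc (n:ℂ) ^ (r + s - p - q) * (poch p n * poch q n) * ((p + n) * (q + n) * (Complex.GammaSeq p n * Complex.GammaSeq q n))
      = (n:ℂ) ^ (r + s - p - q) * ((Complex.GammaSeq p n * (poch p n * (p + n))) * (Complex.GammaSeq q n * (poch q n * (q + n)))) := by ring
    _ = (n:ℂ) ^ (r + s - p - q) * (((n:ℂ)^p * (Nat.factorial n : ℂ)) * ((n:ℂ)^q * (Nat.factorial n : ℂ))) := by
        rw [GammaSeq_mul p hp, GammaSeq_mul q hq]
    _ = ((n:ℂ)^r * (Nat.factorial n : ℂ)) * ((n:ℂ)^s * (Nat.factorial n : ℂ)) := by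
        linear_combination ((Nat.factorial n : ℂ))^2 * hpow
    _ = (Complex.GammaSeq r n * (poch r n * (r + n))) * (Complex.GammaSeq s n * (poch s n * (s + n))) := by
        rw [GammaSeq_mul r hr, GammaSeq_mul s hs]
    _ = (r + n) * (s + n) * (Complex.GammaSeq r n * Complex.GammaSeq s n) * (poch r n * poch s n) := by ring

lemma not_nonpos_of_re_pos {x : ℂ} (hx : 0 < x.re) : ∀ k : ℕ, x ≠ -k := by
  intro k hk
  have : x.re = -(k:ℝ) := by rw [hk]; simp
  have h2 : (0:ℝ) ≤ (k:ℝ) := Nat.cast_nonneg k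
  linarith

lemma one_not_nonpos : ∀ k : ℕ, (1:ℂ) ≠ -k := not_nonpos_of_re_pos (by norm_num)

lemma poch_term_zero {x : ℂ} {m : ℕ} (hx : x = -(m:ℂ)) {k : ℕ} (hmk : m < k) :
    poch x k = 0 :=
  Finset.prod_eq_zero (Finset.mem_range.2 hmk) (by simp [hx])

lemma core_tendsto (a b c' : ℂ) (ha : ∀ k : ℕ, a ≠ -k) (hb : ∀ k : ℕ, b ≠ -k)
    (hc' : ∀ k : ℕ, c' ≠ -k) :
    Tendsto (fun n : ℕ => (n:ℂ) ^ (c' + 1 - a - b) * T a b c' n) atTop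
      (𝓝 (Complex.Gamma c' / (Complex.Gamma a * Complex.Gamma b))) := by
  have := ratio_tendsto a b c' 1 ha hb hc' one_not_nonpos
  simp only [poch_one, Complex.Gamma_one, mul_one] at this
  exact this.congr fun n => by rw [T]

lemma summable_T (a b c' : ℂ) (hc' : ∀ k : ℕ, c' ≠ -k) (h : 0 < (c' - a - b).re) :
    Summable (T a b c') := by
  by_cases ha : ∀ k : ℕ, a ≠ -k
  · by_cases hb : ∀ k : ℕ, b ≠ -k
    · -- main case
      set e : ℝ := (c' - a - b).re with he
      have hX := core_tendsto a b c' ha hb hc'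
      have hM : ∀ᶠ n : ℕ in atTop,
          ‖(n:ℂ) ^ (c' + 1 - a - b) * T a b c' n‖ <
            ‖Complex.Gamma c' / (Complex.Gamma a * Complex.Gamma b)‖ + 1 :=
        hX.norm.eventually_lt_const (lt_add_one _)
      set M : ℝ := ‖Complex.Gamma c' / (Complex.Gamma a * Complex.Gamma b)‖ + 1 with hMdef
      apply Summable.of_norm_bounded_eventually_nat (g := fun n => M * (n:ℝ) ^ (-(1 + e)))
      · exact (Real.summable_nat_rpow.2 (by linarith)).mul_left M
      · filter_upwards [hM, eventually_ge_atTop 1] with n hMn hn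
        have hn0 : (0:ℝ) < n := by exact_mod_cast hn
        have hnorm : ‖(n:ℂ) ^ (c' + 1 - a - b) * T a b c' n‖
            = (n:ℝ) ^ (1 + e) * ‖T a b c' n‖ := by
          rw [norm_mul,
            show ((n:ℕ):ℂ) = (((n:ℕ):ℝ):ℂ) by push_cast; ring,
            Complex.norm_cpow_eq_rpow_re_of_pos hn0]
          congr 2
          simp only [he, Complex.add_re, Complex.sub_re, Complex.one_re]
          ring
        have hpos : (0:ℝ) < (n:ℝ) ^ (1 + e) := Real.rpow_pos_of_pos hn0 _
        have hTn : ‖T a b c' n‖ = ‖(n:ℂ) ^ (c' + 1 - a - b) * T a b c' n‖ * ((n:ℝ) ^ (1 + e))⁻¹ := by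
          rw [hnorm]; field_simp
        rw [hTn, Real.rpow_neg (le_of_lt hn0)]
        gcongr
    · push_neg at hb
      obtain ⟨m, hm⟩ := hb
      apply summable_of_ne_finset_zero (s := Finset.range (m+1))
      intro k hk
      have hmk : m < k := by simpa using hk
      rw [T, poch_term_zero hm hmk, mul_zero, zero_div]
  · push_neg at ha
    obtain ⟨m, hm⟩ := ha
    apply summable_of_ne_finset_zero (s := Finset.range (m+1))
    intro k hk
    have hmk : m < k := by simpa using hk
    rw [T, poch_term_zero hm hmk, zero_mul, zero_div]

lemma G_tendsto (a b c' : ℂ) (hc1 : ∀ k : ℕ, c' + 1 ≠ -k) (h : 0 < (c' - a - b).re) :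
    Tendsto (fun n : ℕ => (n:ℂ) * (c' + n) * T a b (c' + 1) n) atTop (𝓝 0) := by
  by_cases ha : ∀ k : ℕ, a ≠ -k
  · by_cases hb : ∀ k : ℕ, b ≠ -k
    · have hX := core_tendsto a b (c' + 1) ha hb hc1
      have hY : Tendsto (fun n : ℕ => (c' / n + 1) * (n:ℂ) ^ (a + b - c')) atTop (𝓝 0) := by
        have h1 : Tendsto (fun n : ℕ => c' / (n:ℂ) + 1) atTop (𝓝 1) := by
          have := (tendsto_const_div_nat c').add (tendsto_const_nhds (x := (1:ℂ)))
          simpa using this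
        have h2 : Tendsto (fun n : ℕ => (n:ℂ) ^ (a + b - c')) atTop (𝓝 0) := by
          apply tendsto_cpow_neg
          have : (a + b - c').re = -(c' - a - b).re := by
            simp [Complex.add_re, Complex.sub_re]; ring
          rw [this]; linarith
        simpa using h1.mul h2
      have := hX.mul hY
      rw [mul_zero] at this
      refine Tendsto.congr' ?_ this
      filter_upwards [eventually_ge_atTop 1] with n hn
      have hn0 : (n:ℂ) ≠ 0 := Nat.cast_ne_zero.2 (by omega)
      have h2 : (n:ℂ) ^ (c' + 1 + 1 - a - b) * (n:ℂ) ^ (a + b - c') = (n:ℂ) * (n:ℂ) := by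
        rw [← Complex.cpow_add _ _ hn0, show c' + 1 + 1 - a - b + (a + b - c') = 2 by ring,
          show ((2:ℂ)) = ((2:ℕ):ℂ) by norm_num, Complex.cpow_natCast]
        ring
      field_simp
      linear_combination (T a b (c' + 1) n * (c' + n)) * h2
    · push_neg at hb
      obtain ⟨m, hm⟩ := hb
      refine Tendsto.congr' ?_ (tendsto_const_nhds (x := (0:ℂ)))
      filter_upwards [eventually_gt_atTop m] with n hn
      rw [T, poch_term_zero hm hn, mul_zero, zero_div, mul_zero]
  · push_neg at ha
    obtain ⟨m, hm⟩ := ha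
    refine Tendsto.congr' ?_ (tendsto_const_nhds (x := (0:ℂ)))
    filter_upwards [eventually_gt_atTop m] with n hn
    rw [T, poch_term_zero hm hn, zero_mul, zero_div, mul_zero]

lemma relation (a b c' : ℂ) (hc' : ∀ k : ℕ, c' ≠ -k) (h : 0 < (c' - a - b).re) :
    c' * (c' - a - b) * ∑' k, T a b c' k = (c' - a) * (c' - b) * ∑' k, T a b (c' + 1) k := by
  have hc1 : ∀ k : ℕ, c' + 1 ≠ -k := by
    intro k hk; exact hc' (k+1) (by push_cast; linear_combination hk)
  have h1 : 0 < (c' + 1 - a - b).re := by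
    have he : (c' + 1 - a - b).re = (c' - a - b).re + 1 := by
      simp only [Complex.add_re, Complex.sub_re, Complex.one_re]; ring
    rw [he]; linarith
  have S1 := summable_T a b c' hc' h
  have S2 := summable_T a b (c' + 1) hc1 h1
  have hsum : HasSum (fun k : ℕ => c' * (c' - a - b) * T a b c' k
        - (c' - a) * (c' - b) * T a b (c' + 1) k)
      (c' * (c' - a - b) * ∑' k, T a b c' k - (c' - a) * (c' - b) * ∑' k, T a b (c' + 1) k) :=
    (S1.hasSum.mul_left _).sub (S2.hasSum.mul_left _)
  have hpartial := hsum.tendsto_sum_nat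
  have heq : ∀ n : ℕ, (∑ k ∈ Finset.range n, (c' * (c' - a - b) * T a b c' k
      - (c' - a) * (c' - b) * T a b (c' + 1) k))
      = -((n:ℂ) * (c' + n) * T a b (c' + 1) n) := by
    intro n
    have hstep : ∀ k : ℕ, c' * (c' - a - b) * T a b c' k - (c' - a) * (c' - b) * T a b (c' + 1) k
        = (fun k : ℕ => (k:ℂ) * (c' + k) * T a b (c' + 1) k) k
          - (fun k : ℕ => (k:ℂ) * (c' + k) * T a b (c' + 1) k) (k + 1) := by
      intro k
      rw [step a b c' hc' k]
      push_cast
      ring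
    rw [Finset.sum_congr rfl (fun k _ => hstep k),
      Finset.sum_range_sub' (fun k : ℕ => (k:ℂ) * (c' + k) * T a b (c' + 1) k) n]
    simp
  have h0 : Tendsto (fun n : ℕ => ∑ k ∈ Finset.range n, (c' * (c' - a - b) * T a b c' k
      - (c' - a) * (c' - b) * T a b (c' + 1) k)) atTop (𝓝 0) := by
    have := (G_tendsto a b c' hc1 h).neg
    rw [neg_zero] at this
    exact this.congr fun n => (heq n).symm
  have := tendsto_nhds_unique hpartial h0
  linear_combination this

lemma iterate_rel (a b c : ℂ) (hc : ∀ k : ℕ, c ≠ -k) (h : 0 < (c - a - b).re) (m : ℕ) :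
    poch c m * poch (c - a - b) m * ∑' k, T a b c k
      = poch (c - a) m * poch (c - b) m * ∑' k, T a b (c + m) k := by
  induction m with
  | zero => simp [poch_zero]
  | succ n ih =>
    have hcn : ∀ k : ℕ, c + n ≠ -k := fun k hk => hc (k + n) (by push_cast; linear_combination hk)
    have hn : 0 < (c + n - a - b).re := by
      have he : (c + n - a - b).re = (c - a - b).re + n := by
        simp only [Complex.add_re, Complex.sub_re, Complex.natCast_re]; ring
      rw [he]
      have : (0:ℝ) ≤ n := Nat.cast_nonneg n
      linarith
    have hrel := relation a b (c + n) hcn hn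
    have hcast : c + ((n + 1 : ℕ):ℂ) = (c + n) + 1 := by push_cast; ring
    rw [poch_succ, poch_succ, poch_succ, poch_succ, hcast]
    linear_combination ((c + n) * (c - a - b + n)) * ih
      + (poch (c - a) n * poch (c - b) n) * hrel

noncomputable def rpoch (x : ℝ) (k : ℕ) : ℝ := ∏ i ∈ Finset.range k, (x + i)

lemma rpoch_pos {x : ℝ} (hx : 0 < x) (k : ℕ) : 0 < rpoch x k :=
  Finset.prod_pos fun i _ => by positivity

lemma rpoch_succ' (x : ℝ) (k : ℕ) : rpoch x (k + 1) = x * rpoch (x + 1) k := by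
  rw [rpoch, Finset.prod_range_succ', rpoch]
  simp only [Nat.cast_zero, add_zero, Nat.cast_add, Nat.cast_one]
  rw [mul_comm]
  congr 1
  exact Finset.prod_congr rfl fun i _ => by ring

lemma rpoch_mono {x y : ℝ} (hy : 0 < y) (hxy : y ≤ x) (k : ℕ) :
    rpoch y k ≤ rpoch x k :=
  Finset.prod_le_prod (fun i _ => by positivity) (fun i _ => by linarith)

lemma rpoch_ratio {x y : ℝ} (hy : 0 < y) (hxy : y ≤ x) {k : ℕ} (hk : 1 ≤ k) :
    (x / y) * rpoch y k ≤ rpoch x k := by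
  obtain ⟨k', rfl⟩ : ∃ k', k = k' + 1 := ⟨k - 1, by omega⟩
  rw [rpoch_succ', rpoch_succ', ← mul_assoc, div_mul_cancel₀ _ (ne_of_gt hy)]
  have := rpoch_mono (x := x + 1) (y := y + 1) (by linarith) (by linarith) k'
  have hx : 0 < x := lt_of_lt_of_le hy hxy
  nlinarith [rpoch_pos (show (0:ℝ) < y + 1 by linarith) k']

lemma poch_ofReal (x : ℝ) (k : ℕ) : poch (x:ℂ) k = ((rpoch x k : ℝ) : ℂ) := by
  rw [poch, rpoch]
  push_cast
  rfl

lemma norm_poch_le (x : ℂ) (k : ℕ) : ‖poch x k‖ ≤ rpoch (‖x‖ + 1) k := by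
  rw [poch, norm_prod]
  apply Finset.prod_le_prod (fun i _ => norm_nonneg _)
  intro i _
  calc ‖x + i‖ ≤ ‖x‖ + ‖(i:ℂ)‖ := norm_add_le _ _
    _ ≤ ‖x‖ + 1 + i := by
        rw [show ‖((i:ℕ):ℂ)‖ = (i:ℝ) by rw [Complex.norm_natCast]]
        linarith

lemma le_norm_poch_shift (c : ℂ) (n k : ℕ) (hn : ‖c‖ ≤ (n:ℝ)) :
    rpoch ((n:ℝ) - ‖c‖) k ≤ ‖poch (c + n) k‖ := by
  rw [poch, norm_prod]
  have h0 : (0:ℝ) ≤ (n:ℝ) - ‖c‖ := by linarith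
  apply Finset.prod_le_prod (fun i _ => by positivity)
  intro i _
  have h1 : ‖((n:ℂ) + i)‖ = (n:ℝ) + i := by
    rw [show ((n:ℕ):ℂ) + ((i:ℕ):ℂ) = (((n + i : ℕ)):ℂ) by push_cast; ring, Complex.norm_natCast]
    push_cast; ring
  have h2 : ‖(n:ℂ) + i‖ - ‖c‖ ≤ ‖c + ↑n + ↑i‖ := by
    have h3 : ‖(n:ℂ) + i‖ ≤ ‖c + ↑n + ↑i‖ + ‖c‖ := by
      calc ‖(n:ℂ) + i‖ = ‖(c + ↑n + ↑i) + (-c)‖ := by ring_nf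
        _ ≤ ‖c + ↑n + ↑i‖ + ‖(-c)‖ := norm_add_le _ _
        _ = ‖c + ↑n + ↑i‖ + ‖c‖ := by rw [norm_neg]
    linarith
  rw [h1] at h2
  linarith

lemma tail_tendsto (a b c : ℂ) (hc : ∀ k : ℕ, c ≠ -k) :
    Tendsto (fun n : ℕ => ∑' k, T a b (c + n) k) atTop (𝓝 1) := by
  set α : ℝ := ‖a‖ + 1 with hα
  set β : ℝ := ‖b‖ + 1 with hβ
  set N₀ : ℕ := ⌈‖c‖ + ‖a‖ + ‖b‖ + 4⌉₊ with hN₀def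
  have hN₀ : ‖c‖ + ‖a‖ + ‖b‖ + 4 ≤ (N₀:ℝ) := Nat.le_ceil _
  set y : ℝ := (N₀:ℝ) - ‖c‖ with hydef
  have hy : 0 < y := by
    have := norm_nonneg a; have := norm_nonneg b
    simp only [hydef]; linarith
  have hyc : ∀ k : ℕ, (y:ℂ) ≠ -(k:ℂ) := by
    intro k hk
    have h1 : y = -(k:ℝ) := by exact_mod_cast hk
    have h2 : (0:ℝ) ≤ (k:ℝ) := Nat.cast_nonneg k
    linarith
  have hre : 0 < ((y:ℂ) - α - β).re := by
    have : ((y:ℂ) - α - β).re = y - α - β := by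
      simp [Complex.sub_re, Complex.ofReal_re]
    rw [this]
    have := norm_nonneg a; have := norm_nonneg b
    simp only [hydef, hα, hβ]; linarith
  have hg : Summable (fun k => T (α:ℂ) (β:ℂ) (y:ℂ) k) := summable_T _ _ _ hyc hre
  set g : ℕ → ℝ := fun k => rpoch α k * rpoch β k / (rpoch y k * (Nat.factorial k : ℝ))
    with hgdef
  have hgeq : ∀ k, T (α:ℂ) (β:ℂ) (y:ℂ) k = ((g k : ℝ) : ℂ) := by
    intro k
    rw [T, poch_ofReal, poch_ofReal, poch_ofReal, hgdef]
    push_cast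
    ring
  have hgsum : Summable g := by
    have : Summable (fun k => ((g k : ℝ) : ℂ)) := hg.congr hgeq
    exact Complex.summable_ofReal.1 this
  have hgpos : ∀ k, 0 ≤ g k := by
    intro k
    have h1 := rpoch_pos (show (0:ℝ) < α by simp only [hα]; positivity) k
    have h2 := rpoch_pos (show (0:ℝ) < β by simp only [hβ]; positivity) k
    have h3 := rpoch_pos hy k
    have h4 : (0:ℝ) < (Nat.factorial k : ℝ) := by exact_mod_cast Nat.factorial_pos k
    rw [hgdef]
    positivity
  have hgshift : Summable (fun k => g (k + 1)) := (summable_nat_add_iff 1).2 hgsum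
  set Cg : ℝ := ∑' k, g (k + 1) with hCgdef
  have hCg : 0 ≤ Cg := tsum_nonneg fun k => hgpos (k + 1)
  have key : ∀ n : ℕ, N₀ ≤ n → ‖(∑' k, T a b (c + n) k) - 1‖ ≤ y * Cg * ((n:ℝ) - ‖c‖)⁻¹ := by
    intro n hn
    have hNn : (N₀:ℝ) ≤ (n:ℝ) := Nat.cast_le.2 hn
    have hnc : ‖c‖ ≤ (n:ℝ) := by linarith [hN₀, norm_nonneg a, norm_nonneg b]
    set x : ℝ := (n:ℝ) - ‖c‖ with hxdef
    have hyx : y ≤ x := by simp only [hydef, hxdef]; linarith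
    have hx : 0 < x := lt_of_lt_of_le hy hyx
    have hcn : ∀ k : ℕ, c + n ≠ -k := fun k hk => hc (k + n) (by push_cast; linear_combination hk)
    have hren : 0 < (c + n - a - b).re := by
      have h2 : |(c - a - b).re| ≤ ‖c - a - b‖ := by
        exact Complex.abs_re_le_norm _
      have h3 : ‖c - a - b‖ ≤ ‖c‖ + ‖a‖ + ‖b‖ := by
        calc ‖c - a - b‖ ≤ ‖c - a‖ + ‖b‖ := norm_sub_le _ _
          _ ≤ ‖c‖ + ‖a‖ + ‖b‖ := by linarith [norm_sub_le c a]
      have h5 : -(‖c‖ + ‖a‖ + ‖b‖) ≤ (c - a - b).re := by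
        have := (abs_le.1 (h2.trans h3)).1; linarith
      have h4 : (c + n - a - b).re = (c - a - b).re + n := by
        simp only [Complex.add_re, Complex.sub_re, Complex.natCast_re]; ring
      rw [h4]; linarith
    have hSsum := summable_T a b (c + n) hcn hren
    have hT0 : T a b (c + n) 0 = 1 := by simp [T, poch_zero]
    have hsplit : (∑' k, T a b (c + n) k) - 1 = ∑' k, T a b (c + n) (k + 1) := by
      rw [Summable.tsum_eq_zero_add hSsum, hT0]; ring
    rw [hsplit]
    have hbound : ∀ k : ℕ, ‖T a b (c + n) (k + 1)‖ ≤ (y / x) * g (k + 1) := by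
      intro k
      set K : ℕ := k + 1 with hKdef
      have hK1 : 1 ≤ K := by omega
      have hfacpos : (0:ℝ) < (Nat.factorial K : ℝ) := by exact_mod_cast Nat.factorial_pos K
      have hry := rpoch_pos hy K
      have hratio := rpoch_ratio hy hyx hK1
      have hshift := le_norm_poch_shift c n K hnc
      rw [T, norm_div, norm_mul, norm_mul, Complex.norm_natCast]
      have hd : (x / y) * (rpoch y K * (Nat.factorial K : ℝ))
          ≤ ‖poch (c + n) K‖ * (Nat.factorial K : ℝ) := by
        have : (x / y) * rpoch y K ≤ ‖poch (c + n) K‖ := le_trans hratio hshift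
        nlinarith
      have hαpos : (0:ℝ) < α := by simp only [hα]; positivity
      have hβpos : (0:ℝ) < β := by simp only [hβ]; positivity
      have hnum : ‖poch a K‖ * ‖poch b K‖ ≤ rpoch α K * rpoch β K := by
        apply mul_le_mul (norm_poch_le a K) (norm_poch_le b K) (norm_nonneg _)
        exact (rpoch_pos hαpos K).le
      have hdpos : (0:ℝ) < (x / y) * (rpoch y K * (Nat.factorial K : ℝ)) := by positivity
      calc ‖poch a K‖ * ‖poch b K‖ / (‖poch (c + n) K‖ * (Nat.factorial K : ℝ))
          ≤ (rpoch α K * rpoch β K) / ((x / y) * (rpoch y K * (Nat.factorial K : ℝ))) :=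
            div_le_div₀ (mul_nonneg (rpoch_pos hαpos K).le (rpoch_pos hβpos K).le) hnum hdpos hd
        _ = (y / x) * g K := by
            rw [hgdef]
            field_simp
    have hHas : HasSum (fun k => (y / x) * g (k + 1)) ((y / x) * Cg) := hgshift.hasSum.mul_left _
    have := tsum_of_norm_bounded hHas hbound
    calc ‖∑' k, T a b (c + n) (k + 1)‖ ≤ (y / x) * Cg := this
      _ = y * Cg * x⁻¹ := by ring
  have hzero : Tendsto (fun n : ℕ => y * Cg * ((n:ℝ) - ‖c‖)⁻¹) atTop (𝓝 0) := by
    have h1 : Tendsto (fun n : ℕ => (n:ℝ) - ‖c‖) atTop atTop :=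
      tendsto_atTop_add_const_right _ _ tendsto_natCast_atTop_atTop
    have h2 := h1.inv_tendsto_atTop
    have := h2.const_mul (y * Cg)
    simpa using this
  rw [tendsto_iff_dist_tendsto_zero]
  apply squeeze_zero' (Eventually.of_forall fun n => dist_nonneg) ?_ hzero
  filter_upwards [eventually_ge_atTop N₀] with n hn
  rw [dist_eq_norm]
  exact key n hn

theorem gauss_summation (a b c : ℂ) (hc : ∀ k : ℕ, c ≠ -(k : ℂ))
    (h : 0 < (c - a - b).re) :
    HasSum (fun k : ℕ => poch a k * poch b k / (poch c k * (Nat.factorial k : ℂ)))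
      (Complex.Gamma c * Complex.Gamma (c - a - b) /
        (Complex.Gamma (c - a) * Complex.Gamma (c - b))) := by
  have hsum := summable_T a b c hc h
  suffices hval : ∑' k, T a b c k = Complex.Gamma c * Complex.Gamma (c - a - b) /
      (Complex.Gamma (c - a) * Complex.Gamma (c - b)) by
    have hhs := hsum.hasSum
    rw [hval] at hhs
    exact hhs
  have hcab : ∀ k : ℕ, c - a - b ≠ -k := not_nonpos_of_re_pos h
  by_cases hd : (∀ m : ℕ, c - a ≠ -(m:ℂ)) ∧ (∀ m : ℕ, c - b ≠ -(m:ℂ))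
  · obtain ⟨hda, hdb⟩ := hd
    have hQ := ratio_tendsto (c - a) (c - b) c (c - a - b) hda hdb hc hcab
    have hQ' : Tendsto (fun n : ℕ => poch (c - a) n * poch (c - b) n /
        (poch c n * poch (c - a - b) n)) atTop
        (𝓝 (Complex.Gamma c * Complex.Gamma (c - a - b) /
          (Complex.Gamma (c - a) * Complex.Gamma (c - b)))) := by
      refine hQ.congr fun n => ?_
      rw [show c + (c - a - b) - (c - a) - (c - b) = 0 by ring, Complex.cpow_zero, one_mul]
    have hS := tail_tendsto a b c hc
    have hcomb := hQ'.mul hS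
    rw [mul_one] at hcomb
    have hconst : ∀ n : ℕ, (poch (c - a) n * poch (c - b) n /
        (poch c n * poch (c - a - b) n)) * ∑' k, T a b (c + n) k = ∑' k, T a b c k := by
      intro n
      have hiter := iterate_rel a b c hc h n
      have h1 : poch c n ≠ 0 := poch_ne_zero hc n
      have h2 : poch (c - a - b) n ≠ 0 := poch_ne_zero hcab n
      field_simp
      linear_combination -hiter
    have hT := hcomb.congr hconst
    exact tendsto_nhds_unique (tendsto_const_nhds.congr fun n => rfl) hT
  · have hdeg : (∃ m : ℕ, c - a = -(m:ℂ)) ∨ (∃ m : ℕ, c - b = -(m:ℂ)) := by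
      by_contra hcon
      push_neg at hcon
      exact hd ⟨hcon.1, hcon.2⟩
    have hSc : ∑' k, T a b c k = 0 := by
      obtain ⟨m, hm⟩ | ⟨m, hm⟩ := hdeg <;>
      · have hc'm : ∀ k : ℕ, c + m ≠ -(k:ℂ) :=
          fun k hk => hc (k + m) (by push_cast; linear_combination hk)
        have hrem : 0 < (c + m - a - b).re := by
          have he : (c + m - a - b).re = (c - a - b).re + m := by
            simp only [Complex.add_re, Complex.sub_re, Complex.natCast_re]; ring
          rw [he]
          have : (0:ℝ) ≤ (m:ℝ) := Nat.cast_nonneg m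
          linarith
        have hrel := relation a b (c + m) hc'm hrem
        have hne1 : (c + (m:ℂ)) ≠ 0 := fun h0 => hc m (by linear_combination h0)
        have hne2 : (c + (m:ℂ) - a - b) ≠ 0 := by
          intro h0; rw [h0] at hrem; simp at hrem
        have hSm : ∑' k, T a b (c + m) k = 0 := by
          have hz : (c + (m:ℂ) - a) * (c + (m:ℂ) - b) = 0 := by
            first
            | (rw [show c + (m:ℂ) - a = 0 by linear_combination hm, zero_mul])
            | (rw [show c + (m:ℂ) - b = 0 by linear_combination hm, mul_zero])
          rw [hz, zero_mul] at hrel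
          exact (mul_eq_zero.mp hrel).resolve_left (mul_ne_zero hne1 hne2)
        have hiter := iterate_rel a b c hc h m
        rw [hSm, mul_zero] at hiter
        have h1 : poch c m ≠ 0 := poch_ne_zero hc m
        have h2 : poch (c - a - b) m ≠ 0 := poch_ne_zero hcab m
        exact (mul_eq_zero.mp hiter).resolve_left (mul_ne_zero h1 h2)
    have hGamma : Complex.Gamma (c - a) * Complex.Gamma (c - b) = 0 := by
      obtain ⟨m, hm⟩ | ⟨m, hm⟩ := hdeg
      · rw [hm, Complex.Gamma_neg_nat_eq_zero, zero_mul]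
      · rw [hm, Complex.Gamma_neg_nat_eq_zero, mul_zero]
    rw [hSc, hGamma, div_zero]
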